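/- Let P⁺ be a d×d real symmetric positive definite matrix and P a d×d real symmetric positive definite matrix with P⁺ − P positive semidefinite. Then P⁻¹ − (P⁺)⁻¹ is positive semidefinite, and there exist an integer r with 0 ≤ r ≤ d, a real r×d matrix Θ of rank r, and an r×r diagonal matrix N with strictly positive diagonal entries (with the convention that r = 0 gives Θᵀ N⁻¹ Θ = 0), such that P = ((P⁺)⁻¹ + Θᵀ N⁻¹ Θ)⁻¹. (Equivalence of the non-convex compression design problem and its convex relaxation.) -/

import Mathlib

open Matrix

section Aux

variable {n : Type*} [Fintype n] [DecidableEq n]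

lemma posDef_conj_aux {A S : Matrix n n ℝ} (hA : A.PosDef) (hS : IsUnit S.det) :
    (Sᴴ * A * S).PosDef := by
  refine .of_dotProduct_mulVec_pos (isHermitian_conjTranspose_mul_mul S hA.1) fun x hx => ?_
  have hSx : S *ᵥ x ≠ 0 := by
    intro h
    apply hx
    have := congrArg (fun v => S⁻¹ *ᵥ v) h
    simpa [Matrix.mulVec_mulVec, Matrix.nonsing_inv_mul S hS] using this
  simpa only [star_mulVec, dotProduct_mulVec, vecMul_vecMul] using hA.dotProduct_mulVec_pos hSx

open scoped MatrixOrder in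
lemma sqrt_facts {X : Matrix n n ℝ} (hX : X.PosDef) :
    ∃ T : Matrix n n ℝ, Tᴴ = T ∧ T.PosSemidef ∧ T * T = X⁻¹ ∧ T * X * T = 1 ∧ IsUnit T.det := by
  have hXdet : IsUnit X.det := isUnit_iff_ne_zero.mpr hX.det_pos.ne'
  have hXinv : (X⁻¹).PosDef := hX.inv
  refine ⟨CFC.sqrt X⁻¹, (CFC.sqrt_nonneg X⁻¹).posSemidef.1,
    (CFC.sqrt_nonneg X⁻¹).posSemidef, CFC.sqrt_mul_sqrt_self X⁻¹ hXinv.posSemidef.nonneg, ?_, ?_⟩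
  · set T := CFC.sqrt X⁻¹ with hT
    have hTT : T * T = X⁻¹ := CFC.sqrt_mul_sqrt_self X⁻¹ hXinv.posSemidef.nonneg
    have h1 : T * X⁻¹ = X⁻¹ * T := by rw [← hTT, Matrix.mul_assoc]
    have hc : X * T = T * X := by
      calc X * T = X * (T * X⁻¹ * X) := by
            rw [Matrix.mul_assoc T, Matrix.nonsing_inv_mul X hXdet, Matrix.mul_one]
      _ = X * (X⁻¹ * T * X) := by rw [h1]
      _ = (X * X⁻¹) * T * X := by noncomm_ring
      _ = T * X := by rw [Matrix.mul_nonsing_inv X hXdet, Matrix.one_mul]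
    calc T * X * T = X * T * T := by rw [← hc]
    _ = X * X⁻¹ := by rw [Matrix.mul_assoc, hTT]
    _ = 1 := Matrix.mul_nonsing_inv X hXdet
  · set T := CFC.sqrt X⁻¹ with hT
    have hTT : T * T = X⁻¹ := CFC.sqrt_mul_sqrt_self X⁻¹ hXinv.posSemidef.nonneg
    have : T.det * T.det = X⁻¹.det := by rw [← Matrix.det_mul, hTT]
    have hd : X⁻¹.det ≠ 0 := hXinv.det_pos.ne'
    refine isUnit_iff_ne_zero.mpr fun h => hd ?_
    rw [← this, h, mul_zero]

lemma step_aux {X : Matrix n n ℝ} (hX : X.PosDef) (h1 : ((1 : Matrix n n ℝ) - X).PosSemidef) :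
    (X⁻¹ - 1).PosSemidef := by
  obtain ⟨T, hTH, _, hTT, hTXT, _⟩ := sqrt_facts hX
  have := h1.mul_mul_conjTranspose_same T
  rw [hTH] at this
  have heq : T * (1 - X) * T = X⁻¹ - 1 := by
    rw [Matrix.mul_sub, Matrix.mul_one, Matrix.sub_mul, hTT, hTXT]
  rwa [heq] at this

lemma inv_sub_inv_psd {A B : Matrix n n ℝ} (hA : A.PosDef) (hB : B.PosDef)
    (h : (A - B).PosSemidef) : (B⁻¹ - A⁻¹).PosSemidef := by
  obtain ⟨R, hRH, _, hRR, hRAR, hRdet⟩ := sqrt_facts hA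
  have hY : (R * B * R).PosDef := by
    have := posDef_conj_aux hB hRdet
    rwa [hRH] at this
  have h1 : ((1 : Matrix n n ℝ) - R * B * R).PosSemidef := by
    have := h.mul_mul_conjTranspose_same R
    rw [hRH] at this
    have heq : R * (A - B) * R = 1 - R * B * R := by
      rw [Matrix.mul_sub, Matrix.sub_mul, hRAR]
    rwa [heq] at this
  have h2 := step_aux hY h1
  have h3 := h2.mul_mul_conjTranspose_same R
  rw [hRH] at h3
  have hYinv : (R * B * R)⁻¹ = R⁻¹ * B⁻¹ * R⁻¹ := by
    rw [Matrix.mul_inv_rev, Matrix.mul_inv_rev, Matrix.mul_assoc]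
  have heq : R * ((R * B * R)⁻¹ - 1) * R = B⁻¹ - A⁻¹ := by
    have hmid : R * (R⁻¹ * B⁻¹ * R⁻¹) * R = B⁻¹ := by
      calc R * (R⁻¹ * B⁻¹ * R⁻¹) * R = (R * R⁻¹) * B⁻¹ * (R⁻¹ * R) := by noncomm_ring
      _ = B⁻¹ := by rw [Matrix.mul_nonsing_inv R hRdet, Matrix.nonsing_inv_mul R hRdet,
        Matrix.one_mul, Matrix.mul_one]
    rw [hYinv, Matrix.mul_sub, Matrix.sub_mul, Matrix.mul_one, hRR, hmid]
  rwa [heq] at h3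

end Aux

open Matrix

lemma psd_decomp {d : ℕ} {M : Matrix (Fin d) (Fin d) ℝ} (hM : M.PosSemidef) :
    ∃ (r : ℕ) (_ : r ≤ d) (Θ : Matrix (Fin r) (Fin d) ℝ),
      Θ.rank = r ∧ Θᵀ * Θ = M := by
  classical
  have hH : M.IsHermitian := hM.1
  set U : Matrix (Fin d) (Fin d) ℝ := (hH.eigenvectorUnitary : Matrix (Fin d) (Fin d) ℝ) with hU
  set lam : Fin d → ℝ := hH.eigenvalues with hlam
  have hspec : M = U * Matrix.diagonal lam * Uᵀ := by
    have h1 := hH.spectral_theorem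
    rw [Unitary.conjStarAlgAut_apply, Matrix.star_eq_conjTranspose, Matrix.conjTranspose_eq_transpose_of_trivial] at h1
    have hd : (RCLike.ofReal ∘ hH.eigenvalues : Fin d → ℝ) = lam := by
      funext i; simp [RCLike.ofReal_real_eq_id, hlam]
    rw [h1, hd]
  have hUtU : Uᵀ * U = 1 := by
    have := Unitary.coe_star_mul_self hH.eigenvectorUnitary
    rwa [Matrix.star_eq_conjTranspose, Matrix.conjTranspose_eq_transpose_of_trivial] at this
  have hMentry : ∀ i j, M i j = ∑ m, lam m * (U i m * U j m) := by
    intro i j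
    rw [hspec]
    simp [Matrix.mul_apply, Matrix.diagonal_apply, Finset.sum_mul, Matrix.transpose_apply]
    apply Finset.sum_congr rfl
    intro m _
    ring
  refine ⟨M.rank, M.rank_le_width, ?_⟩
  have hcard : Fintype.card {i // lam i ≠ 0} = M.rank := (hH.rank_eq_card_non_zero_eigs).symm
  set e : Fin M.rank ≃ {i // lam i ≠ 0} := (Fintype.equivFinOfCardEq hcard).symm with he
  set Θ : Matrix (Fin M.rank) (Fin d) ℝ :=
    Matrix.of (fun k j => Real.sqrt (lam (e k)) * U j (e k)) with hΘ
  have hsq : ∀ a : Fin d, Real.sqrt (lam a) * Real.sqrt (lam a) = lam a := fun a =>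
    Real.mul_self_sqrt (hM.eigenvalues_nonneg a)
  refine ⟨Θ, ?_, ?_⟩
  · -- rank
    have hdiag : Θ * Θᵀ = Matrix.diagonal (fun k => lam (e k)) := by
      ext k l
      simp only [Matrix.mul_apply, Matrix.transpose_apply, hΘ, Matrix.of_apply]
      have hone : ∑ j, U j (e k) * U j (e l) = (1 : Matrix (Fin d) (Fin d) ℝ) (e k) (e l) := by
        rw [← hUtU]
        simp [Matrix.mul_apply, Matrix.transpose_apply]
      calc ∑ j, Real.sqrt (lam (e k)) * U j (e k) * (Real.sqrt (lam (e l)) * U j (e l))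
          = Real.sqrt (lam (e k)) * Real.sqrt (lam (e l)) * ∑ j, U j (e k) * U j (e l) := by
            rw [Finset.mul_sum]; apply Finset.sum_congr rfl; intro j _; ring
      _ = Matrix.diagonal (fun k => lam (e k)) k l := by
          rw [hone]
          by_cases hkl : k = l
          · subst hkl
            simp [Matrix.one_apply, Matrix.diagonal_apply, hsq]
          · have : (e k : Fin d) ≠ (e l : Fin d) := by
              intro h
              exact hkl (e.injective (Subtype.ext h))
            simp [Matrix.one_apply_ne this, Matrix.diagonal_apply_ne _ hkl]
    have h1 : Θ.rank = (Θ * Θᵀ).rank := (Matrix.rank_self_mul_transpose Θ).symm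
    rw [h1, hdiag, Matrix.rank_diagonal]
    rw [Fintype.card_eq.mpr ⟨Equiv.subtypeUnivEquiv (fun k => (e k).2)⟩, Fintype.card_fin]
  · -- Θᵀ * Θ = M
    ext i j
    simp only [Matrix.mul_apply, Matrix.transpose_apply, hΘ, Matrix.of_apply]
    rw [hMentry i j]
    have step1 : ∑ k, Real.sqrt (lam (e k)) * U i (e k) * (Real.sqrt (lam (e k)) * U j (e k))
        = ∑ k, lam (e k) * (U i (e k) * U j (e k)) := by
      apply Finset.sum_congr rfl
      intro k _
      calc Real.sqrt (lam (e k)) * U i (e k) * (Real.sqrt (lam (e k)) * U j (e k))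
          = (Real.sqrt (lam (e k)) * Real.sqrt (lam (e k))) * (U i (e k) * U j (e k)) := by ring
      _ = lam (e k) * (U i (e k) * U j (e k)) := by rw [hsq]
    rw [step1]
    have step2 : ∑ k, lam (e k) * (U i (e k) * U j (e k))
        = ∑ a : {i // lam i ≠ 0}, lam a * (U i a * U j a) :=
      Fintype.sum_equiv e _ _ (fun k => rfl)
    rw [step2]
    have step3 : ∑ m ∈ Finset.univ.filter (fun m => lam m ≠ 0), lam m * (U i m * U j m)
        = ∑ a : {i // lam i ≠ 0}, lam (a : Fin d) * (U i a * U j a) :=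
      Finset.sum_subtype _ (fun x => by simp) _
    rw [← step3]
    apply Finset.sum_filter_of_ne
    intro m _ hne h0
    exact hne (by rw [h0, zero_mul])

/-- Equivalence of the non-convex compression design problem and its convex
relaxation: if `0 ≺ P ⪯ P⁺` then `P⁻¹ − (P⁺)⁻¹ ⪰ 0` and there exist
`0 ≤ r ≤ d`, a full-row-rank `r×d` matrix `Θ` and a diagonal `N ≻ 0` with
`P = ((P⁺)⁻¹ + Θᵀ N⁻¹ Θ)⁻¹` (for `r = 0` the term `Θᵀ N⁻¹ Θ` is zero). -/
theorem convex_relaxation_equivalence {d : ℕ}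
    (Pplus P : Matrix (Fin d) (Fin d) ℝ)
    (hPplus : Pplus.PosDef) (hP : P.PosDef) (hle : (Pplus - P).PosSemidef) :
    (P⁻¹ - Pplus⁻¹).PosSemidef ∧
      ∃ (r : ℕ) (_ : r ≤ d) (Θ : Matrix (Fin r) (Fin d) ℝ) (N : Fin r → ℝ),
        Θ.rank = r ∧ (∀ i, 0 < N i) ∧
          P = (Pplus⁻¹ + Θᵀ * (Matrix.diagonal N)⁻¹ * Θ)⁻¹ := by
  have hM : (P⁻¹ - Pplus⁻¹).PosSemidef := inv_sub_inv_psd hPplus hP hle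
  refine ⟨hM, ?_⟩
  obtain ⟨r, hr, Θ, hrank, hΘ⟩ := psd_decomp hM
  refine ⟨r, hr, Θ, fun _ => 1, hrank, fun _ => one_pos, ?_⟩
  have h1 : (Matrix.diagonal (fun _ => (1:ℝ)) : Matrix (Fin r) (Fin r) ℝ) = 1 :=
    Matrix.diagonal_one
  rw [h1, inv_one, Matrix.mul_one, hΘ]
  have h2 : Pplus⁻¹ + (P⁻¹ - Pplus⁻¹) = P⁻¹ := by abel
  rw [h2, Matrix.nonsing_inv_nonsing_inv P (isUnit_iff_ne_zero.mpr hP.det_pos.ne')]
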